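/- Let S be a left-sided convex point set of n points in general position and let P = d_1,...,d_{n-1} be a path with all labels in {U,D,R}. Define an embedding by processing i = n−1 down to 1: place v_{i+1} on the topmost remaining free point if d_i = U, the bottommost if d_i = D, the rightmost if d_i = R, and finally place v_1 on the last remaining point. Then at every step of this process, the set of already-used points forms a consecutive subset of S along the convex hull. -/

import Mathlib

/-- Edge direction labels. -/
inductive Dir | U | D | L | R
deriving DecidableEq

/-- Opposite label: U↔D, L↔R. -/
def Dir.opp : Dir → Dir
  | .U => .D | .D => .U | .L => .R | .R => .L

/-- Label after counterclockwise rotation by π/2: U↦L, D↦R, R↦U, L↦D. -/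
def Dir.rot : Dir → Dir
  | .U => .L | .D => .R | .R => .U | .L => .D

/-- Label after vertical-line reflection: U↦U, D↦D, R↦L, L↦R. -/
def Dir.mir : Dir → Dir
  | .U => .U | .D => .D | .R => .L | .L => .R

/-- An edge from `a` to `b` is consistent with a direction label. -/
def dirOk : Dir → ℝ × ℝ → ℝ × ℝ → Prop
  | .U, a, b => a.2 < b.2
  | .D, a, b => b.2 < a.2
  | .R, a, b => a.1 < b.1
  | .L, a, b => b.1 < a.1

/-- The drawing of a path with edge labels `d` and vertex placement `E` is
direction-consistent. -/
def DirConsistent {m : ℕ} (d : Fin m → Dir) (E : Fin (m + 1) → ℝ × ℝ) : Prop :=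
  ∀ i : Fin m, dirOk (d i) (E i.castSucc) (E i.succ)

/-- The straight-line drawing of the path with vertex placement `E` is planar:
non-adjacent segments are disjoint; adjacent segments meet only at the shared endpoint. -/
def PlanarDrawing {m : ℕ} (E : Fin (m + 1) → ℝ × ℝ) : Prop :=
  (∀ i j : Fin m, (i : ℕ) + 1 < (j : ℕ) →
    segment ℝ (E i.castSucc) (E i.succ) ∩ segment ℝ (E j.castSucc) (E j.succ) = ∅) ∧
  (∀ i j : Fin m, (i : ℕ) + 1 = (j : ℕ) →
    segment ℝ (E i.castSucc) (E i.succ) ∩ segment ℝ (E j.castSucc) (E j.succ) = {E i.succ})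

/-- `E` is an embedding of the path vertices onto the point set `S`. -/
def EmbOn {m : ℕ} (E : Fin (m + 1) → ℝ × ℝ) (S : Set (ℝ × ℝ)) : Prop :=
  Function.Injective E ∧ Set.range E = S

/-- Planar direction-consistent embedding of the labeled path `d` on `S`. -/
def PDCE {m : ℕ} (d : Fin m → Dir) (E : Fin (m + 1) → ℝ × ℝ) (S : Set (ℝ × ℝ)) : Prop :=
  EmbOn E S ∧ DirConsistent d E ∧ PlanarDrawing E

/-- `S` is in convex position. -/
def ConvexPos (S : Set (ℝ × ℝ)) : Prop :=
  ConvexIndependent ℝ ((↑) : S → ℝ × ℝ)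

/-- No three distinct points of `S` are collinear. -/
def NoThreeCollinear (S : Set (ℝ × ℝ)) : Prop :=
  ∀ p ∈ S, ∀ q ∈ S, ∀ r ∈ S, p ≠ q → p ≠ r → q ≠ r →
    ¬ Collinear ℝ ({p, q, r} : Set (ℝ × ℝ))

/-- General position: no three collinear, no two points with equal x- or y-coordinate. -/
def GenPos (S : Set (ℝ × ℝ)) : Prop :=
  NoThreeCollinear S ∧ ∀ p ∈ S, ∀ q ∈ S, p ≠ q → p.1 ≠ q.1 ∧ p.2 ≠ q.2

def IsTopmost (S : Set (ℝ × ℝ)) (t : ℝ × ℝ) : Prop :=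
  t ∈ S ∧ ∀ p ∈ S, p ≠ t → p.2 < t.2
def IsBottommost (S : Set (ℝ × ℝ)) (b : ℝ × ℝ) : Prop :=
  b ∈ S ∧ ∀ p ∈ S, p ≠ b → b.2 < p.2
def IsLeftmost (S : Set (ℝ × ℝ)) (l : ℝ × ℝ) : Prop :=
  l ∈ S ∧ ∀ p ∈ S, p ≠ l → l.1 < p.1
def IsRightmost (S : Set (ℝ × ℝ)) (r : ℝ × ℝ) : Prop :=
  r ∈ S ∧ ∀ p ∈ S, p ≠ r → p.1 < r.1

/-- Cross product telling on which side of the directed line `a → b` the point `p` lies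
(`0 < cross a b p` means `p` is strictly to the left). -/
def cross (a b p : ℝ × ℝ) : ℝ :=
  (b.1 - a.1) * (p.2 - a.2) - (b.2 - a.2) * (p.1 - a.1)

/-- With `b` bottommost and `t` topmost, all other points lie strictly to the left of the
line through `b` and `t`. -/
def LeftSided (S : Set (ℝ × ℝ)) (b t : ℝ × ℝ) : Prop :=
  IsBottommost S b ∧ IsTopmost S t ∧ ∀ p ∈ S, p ≠ b → p ≠ t → 0 < cross b t p

/-- With `b` bottommost and `t` topmost, all other points lie strictly to the right of the
line through `b` and `t`. -/
def RightSided (S : Set (ℝ × ℝ)) (b t : ℝ × ℝ) : Prop :=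
  IsBottommost S b ∧ IsTopmost S t ∧ ∀ p ∈ S, p ≠ b → p ≠ t → cross b t p < 0

/-- Two points of `S` are consecutive on the convex hull of `S`: all other points of `S`
lie strictly on one side of the line through them. -/
def HullConsecutive (S : Set (ℝ × ℝ)) (p q : ℝ × ℝ) : Prop :=
  p ∈ S ∧ q ∈ S ∧ p ≠ q ∧
    ((∀ r ∈ S, r ≠ p → r ≠ q → 0 < cross p q r) ∨
     (∀ r ∈ S, r ≠ p → r ≠ q → cross p q r < 0))

/-- Strip-convex point set with bottommost `b`, leftmost `l`, topmost `t`, rightmost `r`: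
`b` and `l` coincide or are hull-consecutive, and so do `t` and `r`. -/
def StripConvex (S : Set (ℝ × ℝ)) (b l t r : ℝ × ℝ) : Prop :=
  IsBottommost S b ∧ IsLeftmost S l ∧ IsTopmost S t ∧ IsRightmost S r ∧
    (b = l ∨ HullConsecutive S b l) ∧ (t = r ∨ HullConsecutive S t r)

/-- `T` is a consecutive subset of the convex point set `S` along its hull:
it can be separated from `S \ T` by a line. -/
def Consecutive (S T : Set (ℝ × ℝ)) : Prop :=
  T ⊆ S ∧ ∃ f : (ℝ × ℝ) →ₗ[ℝ] ℝ, ∃ c : ℝ,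
    (∀ p ∈ T, c < f p) ∧ ∀ p ∈ S \ T, f p < c

private lemma cross_swap13 (A B C : ℝ × ℝ) : cross A B C = - cross C B A := by
  simp only [cross]; ring

private lemma cross_swap23 (A B C : ℝ × ℝ) : cross A B C = - cross A C B := by
  simp only [cross]; ring

/-- Linear functional used for separation. -/
private def lmap (a b : ℝ) : (ℝ × ℝ) →ₗ[ℝ] ℝ where
  toFun := fun p => a * p.1 + b * p.2
  map_add' := fun x y => by simp only [Prod.fst_add, Prod.snd_add]; ring
  map_smul' := fun c x => by
    simp only [Prod.smul_fst, Prod.smul_snd, smul_eq_mul, RingHom.id_apply]; ring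

private lemma lmap_apply (a b : ℝ) (p : ℝ × ℝ) : lmap a b p = a * p.1 + b * p.2 := rfl

/-- Chain convexity: in a left-sided convex point set, any point lying y-between two
others lies strictly to the left of the chord through them. -/
private lemma chainConvex {S : Set (ℝ × ℝ)} (hconv : ConvexPos S) {b t : ℝ × ℝ}
    (hside : LeftSided S b t) {p q r : ℝ × ℝ}
    (hp : p ∈ S) (hq : q ∈ S) (hr : r ∈ S)
    (h1 : p.2 < q.2) (h2 : q.2 < r.2) : 0 < cross p r q := by
  by_contra hcr
  push_neg at hcr
  obtain ⟨hb, ht, hleft⟩ := hside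
  have hbp : b.2 ≤ p.2 := by
    rcases eq_or_ne p b with h | h
    · rw [h]
    · exact (hb.2 p hp h).le
  have hrt : r.2 ≤ t.2 := by
    rcases eq_or_ne r t with h | h
    · rw [h]
    · exact (ht.2 r hr h).le
  have hbq : b.2 < q.2 := lt_of_le_of_lt hbp h1
  have hqt : q.2 < t.2 := lt_of_lt_of_le h2 hrt
  have hqb : q ≠ b := fun h => by rw [h] at hbq; exact lt_irrefl _ hbq
  have hqt' : q ≠ t := fun h => by rw [h] at hqt; exact lt_irrefl _ hqt
  have hcq : 0 < cross b t q := hleft q hq hqb hqt'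
  have hDbt : (0:ℝ) < t.2 - b.2 := by linarith
  have hDpr : (0:ℝ) < r.2 - p.2 := by linarith
  -- point m on segment [b,t] at height q.2
  set lam : ℝ := (t.2 - q.2) / (t.2 - b.2) with hlam
  set mu : ℝ := (q.2 - b.2) / (t.2 - b.2) with hmu
  set m : ℝ × ℝ := lam • b + mu • t with hmdef
  have hm1 : m.1 = lam * b.1 + mu * t.1 := by
    simp [hmdef, Prod.fst_add, Prod.smul_fst, smul_eq_mul]
  have hm2 : m.2 = q.2 := by
    simp only [hmdef, Prod.snd_add, Prod.smul_snd, smul_eq_mul, hlam, hmu]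
    field_simp
    ring
  have hmseg : m ∈ segment ℝ b t := by
    refine ⟨lam, mu, ?_, ?_, ?_, rfl⟩
    · exact div_nonneg (by linarith) hDbt.le
    · exact div_nonneg (by linarith) hDbt.le
    · rw [hlam, hmu]; field_simp; ring
  have hqm : q.1 < m.1 := by
    have key : (m.1 - q.1) * (t.2 - b.2) = cross b t q := by
      rw [hm1, hlam, hmu]
      field_simp [cross]
      simp only [cross]; ring
    nlinarith [key, hcq, hDbt]
  -- point w on segment [p,r] at height q.2
  set sig : ℝ := (r.2 - q.2) / (r.2 - p.2) with hsig
  set tau : ℝ := (q.2 - p.2) / (r.2 - p.2) with htau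
  set w : ℝ × ℝ := sig • p + tau • r with hwdef
  have hw1 : w.1 = sig * p.1 + tau * r.1 := by
    simp [hwdef, Prod.fst_add, Prod.smul_fst, smul_eq_mul]
  have hw2 : w.2 = q.2 := by
    simp only [hwdef, Prod.snd_add, Prod.smul_snd, smul_eq_mul, hsig, htau]
    field_simp
    ring
  have hwseg : w ∈ segment ℝ p r := by
    refine ⟨sig, tau, ?_, ?_, ?_, rfl⟩
    · exact div_nonneg (by linarith) hDpr.le
    · exact div_nonneg (by linarith) hDpr.le
    · rw [hsig, htau]; field_simp; ring
  have hwq : w.1 ≤ q.1 := by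
    have key : (q.1 - w.1) * (r.2 - p.2) = - cross p r q := by
      rw [hw1, hsig, htau]
      field_simp [cross]
      simp only [cross]; ring
    nlinarith [key, hcr, hDpr]
  -- q lies on the horizontal segment [w, m]
  have hwm : (0:ℝ) < m.1 - w.1 := by linarith
  set th : ℝ := (q.1 - w.1) / (m.1 - w.1) with hth
  have hth0 : 0 ≤ th := div_nonneg (by linarith) hwm.le
  have hth1 : th ≤ 1 := by
    rw [hth, div_le_one hwm]; linarith
  have hqseg : q ∈ segment ℝ w m := by
    refine ⟨1 - th, th, by linarith, hth0, by ring, ?_⟩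
    have hx : (1 - th) * w.1 + th * m.1 = q.1 := by
      rw [hth]; field_simp; ring
    have hyy : (1 - th) * w.2 + th * m.2 = q.2 := by
      rw [hw2, hm2]; ring
    have : ((1 - th) • w + th • m) = ((1-th) * w.1 + th * m.1, (1-th) * w.2 + th * m.2) := by
      simp [Prod.ext_iff, Prod.fst_add, Prod.snd_add, Prod.smul_fst, Prod.smul_snd,
        smul_eq_mul]
    rw [this, hx, hyy]
  -- hence q is in the convex hull of {b, p, r, t}
  have hH : q ∈ convexHull ℝ ({b, p, r, t} : Set (ℝ × ℝ)) := by
    have hbH : b ∈ convexHull ℝ ({b, p, r, t} : Set (ℝ × ℝ)) :=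
      subset_convexHull ℝ _ (by simp)
    have htH : t ∈ convexHull ℝ ({b, p, r, t} : Set (ℝ × ℝ)) :=
      subset_convexHull ℝ _ (by simp)
    have hpH : p ∈ convexHull ℝ ({b, p, r, t} : Set (ℝ × ℝ)) :=
      subset_convexHull ℝ _ (by simp)
    have hrH : r ∈ convexHull ℝ ({b, p, r, t} : Set (ℝ × ℝ)) :=
      subset_convexHull ℝ _ (by simp)
    have hmH := (convex_convexHull ℝ _).segment_subset hbH htH hmseg
    have hwH := (convex_convexHull ℝ _).segment_subset hpH hrH hwseg
    exact (convex_convexHull ℝ _).segment_subset hwH hmH hqseg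
  -- contradiction with convex independence
  have hbqne : b ≠ q := fun h => by rw [h] at hbq; exact lt_irrefl _ hbq
  have htqne : t ≠ q := fun h => by rw [h] at hqt; exact lt_irrefl _ hqt
  have hpqne : p ≠ q := fun h => by rw [h] at h1; exact lt_irrefl _ h1
  have hrqne : r ≠ q := fun h => by rw [h] at h2; exact lt_irrefl _ h2
  have hsubset : ({b, p, r, t} : Set (ℝ × ℝ)) ⊆
      Subtype.val '' {x : S | (x : ℝ × ℝ) ≠ q} := by
    rintro x hx
    simp only [Set.mem_insert_iff, Set.mem_singleton_iff] at hx
    rcases hx with h | h | h | h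
    · exact ⟨⟨b, hb.1⟩, hbqne, h.symm⟩
    · exact ⟨⟨p, hp⟩, hpqne, h.symm⟩
    · exact ⟨⟨r, hr⟩, hrqne, h.symm⟩
    · exact ⟨⟨t, ht.1⟩, htqne, h.symm⟩
  have := hconv {x : S | (x : ℝ × ℝ) ≠ q} ⟨q, hq⟩ (convexHull_mono hsubset hH)
  exact this rfl
/-- in a left-sided convex point set, removing at each step the topmost,
bottommost, or rightmost of the remaining points always leaves the set of removed
points consecutive along the convex hull. -/
theorem leftSided_removal_consecutive {n : ℕ} (S : Set (ℝ × ℝ)) (hfin : S.Finite)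
    (hcard : S.ncard = n + 1) (hconv : ConvexPos S) (hgen : GenPos S)
    (b t : ℝ × ℝ) (hside : LeftSided S b t)
    (seq : Fin (n + 1) → ℝ × ℝ)
    (hseq : ∀ k : Fin (n + 1),
      IsTopmost (S \ (seq '' {j | j < k})) (seq k) ∨
      IsBottommost (S \ (seq '' {j | j < k})) (seq k) ∨
      IsRightmost (S \ (seq '' {j | j < k})) (seq k)) :
    ∀ k : Fin (n + 1), Consecutive S (seq '' {j | j ≤ k}) := by
  classical
  have hy : ∀ p ∈ S, ∀ q ∈ S, p ≠ q → p.2 ≠ q.2 := fun p hp q hq hne => (hgen.2 p hp q hq hne).2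
  have hmem : ∀ k : Fin (n + 1), seq k ∈ S \ (seq '' {j | j < k}) := by
    intro k
    rcases hseq k with h | h | h
    exacts [h.1, h.1, h.1]
  set A : ℕ → Set (ℝ × ℝ) := fun m => seq '' {j | (j : ℕ) < m} with hA
  have hAk : ∀ k : Fin (n + 1), (seq '' {j | j < k}) = A (k : ℕ) := by
    intro k
    simp only [hA]
    first
    | rfl
    | · congr 1
        ext j
        exact Fin.lt_def
  have hAsub : ∀ m, A m ⊆ S := by
    rintro m x ⟨j, _, rfl⟩
    exact (hmem j).1
  have hstep : ∀ (m : ℕ) (h : m < n + 1), A (m + 1) = A m ∪ {seq ⟨m, h⟩} := by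
    intro m h
    have hset : {j : Fin (n + 1) | (j : ℕ) < m + 1} =
        {j : Fin (n + 1) | (j : ℕ) < m} ∪ {⟨m, h⟩} := by
      ext j
      simp only [Set.mem_setOf_eq, Set.mem_union, Set.mem_singleton_iff, Fin.ext_iff]
      omega
    simp only [hA]
    rw [hset, Set.image_union, Set.image_singleton]
  -- slab invariant
  have slab : ∀ m : ℕ, m ≤ n + 1 →
      ∀ p ∈ S \ A m, ∀ q ∈ S \ A m, ∀ x ∈ S, p.2 ≤ x.2 → x.2 ≤ q.2 → x ∈ S \ A m := by
    intro m
    induction m with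
    | zero =>
      intro _ p _ q _ x hx _ _
      simp only [hA]
      simpa using hx
    | succ m ih =>
      intro hm
      have hm' : m < n + 1 := hm
      have hrec := ih (le_of_lt hm')
      set k : Fin (n + 1) := ⟨m, hm'⟩ with hk
      set z := seq k with hz
      have hzR : z ∈ S \ A m := by
        have := hmem k
        rwa [hAk k] at this
      have hAm1 : S \ A (m + 1) = (S \ A m) \ {z} := by
        rw [Set.diff_diff, ← hstep m hm']
      -- z is topmost or bottommost of the remaining slab
      have htb : IsTopmost (S \ A m) z ∨ IsBottommost (S \ A m) z := by
        rcases hseq k with h | h | h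
        · left; rwa [hAk k] at h
        · right; rwa [hAk k] at h
        · rw [hAk k] at h
          by_contra hc
          push_neg at hc
          obtain ⟨hc1, hc2⟩ := hc
          have h1 : ∃ p ∈ S \ A m, p ≠ z ∧ ¬(p.2 < z.2) := by
            by_contra hp
            push_neg at hp
            exact hc1 ⟨hzR, fun p hp' hne => hp p hp' hne⟩
          have h2 : ∃ p ∈ S \ A m, p ≠ z ∧ ¬(z.2 < p.2) := by
            by_contra hp
            push_neg at hp
            exact hc2 ⟨hzR, fun p hp' hne => hp p hp' hne⟩
          obtain ⟨p, hpR, hpz, hpy⟩ := h1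
          obtain ⟨q, hqR, hqz, hqy⟩ := h2
          have hpy' : z.2 < p.2 :=
            lt_of_le_of_ne (not_lt.1 hpy) fun e => hy z hzR.1 p hpR.1 (Ne.symm hpz) e
          have hqy' : q.2 < z.2 :=
            lt_of_le_of_ne (not_lt.1 hqy) (hy q hqR.1 z hzR.1 hqz)
          have hcr := chainConvex hconv hside hqR.1 hzR.1 hpR.1 hqy' hpy'
          have hpx : p.1 < z.1 := h.2 p hpR hpz
          have hqx : q.1 < z.1 := h.2 q hqR hqz
          simp only [cross] at hcr
          nlinarith [mul_pos (sub_pos.2 hpy') (sub_pos.2 hqx),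
            mul_pos (sub_pos.2 hqy') (sub_pos.2 hpx)]
      intro p hp q hq x hxS h1 h2
      rw [hAm1] at hp hq ⊢
      have hp' := hp.1
      have hq' := hq.1
      have hxR : x ∈ S \ A m := hrec p hp' q hq' x hxS h1 h2
      refine ⟨hxR, ?_⟩
      simp only [Set.mem_singleton_iff]
      intro hxz
      rcases htb with h | h
      · have hqz : q ≠ z := by simpa [Set.mem_singleton_iff] using hq.2
        have := h.2 q hq' hqz
        rw [← hxz] at this
        linarith
      · have hpz : p ≠ z := by simpa [Set.mem_singleton_iff] using hp.2
        have := h.2 p hp' hpz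
        rw [← hxz] at this
        linarith
  -- main construction
  intro k
  have hTA : seq '' {j | j ≤ k} = A ((k : ℕ) + 1) := by
    simp only [hA]
    congr 1
    ext j
    simp only [Set.mem_setOf_eq, Fin.le_def, Nat.lt_succ_iff]
  rw [hTA]
  have hslab := slab ((k : ℕ) + 1) (Nat.succ_le_of_lt k.isLt)
  set T := A ((k : ℕ) + 1) with hT
  set R := S \ T with hRdef
  have hTsub : T ⊆ S := hAsub _
  have hTne : T.Nonempty :=
    ⟨seq 0, 0, show ((0 : Fin (n + 1)) : ℕ) < (k : ℕ) + 1 by simp, rfl⟩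
  have hRfin : R.Finite := hfin.subset Set.diff_subset
  refine ⟨hTsub, ?_⟩
  by_cases hR : R.Nonempty
  · obtain ⟨u, huR, humin⟩ := Set.exists_min_image R Prod.snd hRfin hR
    obtain ⟨v, hvR, hvmax⟩ := Set.exists_max_image R Prod.snd hRfin hR
    have claimT : ∀ x ∈ T, x.2 < u.2 ∨ v.2 < x.2 := by
      intro x hx
      by_contra hcon
      push_neg at hcon
      have hxR : x ∈ R := hslab u huR v hvR x (hTsub hx) hcon.1 hcon.2
      exact hxR.2 hx
    set Below := {x | x ∈ S ∧ x.2 < u.2} with hBel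
    set Above := {x | x ∈ S ∧ v.2 < x.2} with hAbo
    have hBfin : Below.Finite := hfin.subset fun x hx => hx.1
    have hAfin : Above.Finite := hfin.subset fun x hx => hx.1
    by_cases hBne : Below.Nonempty <;> by_cases hAne : Above.Nonempty
    · -- both sides nonempty: separate by the chord through the extreme neighbours
      obtain ⟨P, hPB, hPmax⟩ := Set.exists_max_image Below Prod.snd hBfin hBne
      obtain ⟨Q, hQA, hQmin⟩ := Set.exists_min_image Above Prod.snd hAfin hAne
      have hPS : P ∈ S := hPB.1
      have hQS : Q ∈ S := hQA.1
      have hPu : P.2 < u.2 := hPB.2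
      have hvQ : v.2 < Q.2 := hQA.2
      set a : ℝ := Q.2 - P.2 with ha
      set bb : ℝ := -(Q.1 - P.1) with hbb
      clear_value a bb
      have hkey : ∀ x : ℝ × ℝ, cross P Q x = (a * P.1 + bb * P.2) - (a * x.1 + bb * x.2) := by
        intro x
        simp only [cross, ha, hbb]
        ring
      have hRlt : ∀ x ∈ R, a * x.1 + bb * x.2 < a * P.1 + bb * P.2 := by
        intro x hxR
        have h1 : P.2 < x.2 := lt_of_lt_of_le hPu (humin x hxR)
        have h2 : x.2 < Q.2 := lt_of_le_of_lt (hvmax x hxR) hvQ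
        have h3 := chainConvex hconv hside hPS hxR.1 hQS h1 h2
        have h4 := hkey x
        linarith
      have hTge : ∀ x ∈ T, a * P.1 + bb * P.2 ≤ a * x.1 + bb * x.2 := by
        intro x hx
        have hxS := hTsub hx
        have hPQ : P.2 < Q.2 := by linarith [humin v hvR]
        rcases claimT x hx with hlow | hhigh
        · rcases eq_or_ne x P with rfl | hne
          · linarith
          · have hxP : x.2 < P.2 :=
              lt_of_le_of_ne (hPmax x ⟨hxS, hlow⟩) fun e => hy x hxS P hPS hne e
            have hcc := chainConvex hconv hside hxS hPS hQS hxP hPQ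
            have h5 := cross_swap13 P Q x
            have h6 := hkey x
            linarith
        · rcases eq_or_ne x Q with rfl | hne
          · have h7 : cross P x x = 0 := by simp only [cross]; ring
            linarith [hkey x]
          · have hQx : Q.2 < x.2 :=
              lt_of_le_of_ne (hQmin x ⟨hxS, hhigh⟩) fun e => hy Q hQS x hxS (Ne.symm hne) e
            have hcc := chainConvex hconv hside hPS hQS hxS hPQ hQx
            have h5 := cross_swap23 P Q x
            have h6 := hkey x
            linarith
      obtain ⟨wm, hwmR, hwmax'⟩ :=
        Set.exists_max_image R (fun x : ℝ × ℝ => a * x.1 + bb * x.2) hRfin hR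
      have hwmax : ∀ x ∈ R, a * x.1 + bb * x.2 ≤ a * wm.1 + bb * wm.2 := hwmax'
      refine ⟨lmap a bb, ((a * wm.1 + bb * wm.2) + (a * P.1 + bb * P.2)) / 2, ?_, ?_⟩
      · intro x hx
        have h1 := hTge x hx
        have h2 := hRlt wm hwmR
        simp only [lmap_apply]
        linarith
      · intro x hx
        rw [← hRdef] at hx
        have h1 := hwmax x hx
        simp only [lmap_apply]
        have h2 := hRlt wm hwmR
        linarith
    · -- no points above: separate by a horizontal line below the slab
      obtain ⟨P, hPB, hPmax⟩ := Set.exists_max_image Below Prod.snd hBfin hBne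
      refine ⟨lmap 0 (-1), (-u.2 - P.2) / 2, ?_, ?_⟩
      · intro x hx
        have hxS := hTsub hx
        rcases claimT x hx with hlow | hhigh
        · have h1 : x.2 ≤ P.2 := hPmax x ⟨hxS, hlow⟩
          simp only [lmap_apply]
          have h2 := hPB.2
          linarith
        · exact absurd (⟨x, ⟨hxS, hhigh⟩⟩ : Above.Nonempty) hAne
      · intro x hx
        rw [← hRdef] at hx
        have h1 := humin x hx
        simp only [lmap_apply]
        have h2 := hPB.2
        linarith
    · -- no points below: separate by a horizontal line above the slab
      obtain ⟨Q, hQA, hQmin⟩ := Set.exists_min_image Above Prod.snd hAfin hAne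
      refine ⟨lmap 0 1, (v.2 + Q.2) / 2, ?_, ?_⟩
      · intro x hx
        have hxS := hTsub hx
        rcases claimT x hx with hlow | hhigh
        · exact absurd (⟨x, ⟨hxS, hlow⟩⟩ : Below.Nonempty) hBne
        · have h1 : Q.2 ≤ x.2 := hQmin x ⟨hxS, hhigh⟩
          simp only [lmap_apply]
          have h2 := hQA.2
          linarith
      · intro x hx
        rw [← hRdef] at hx
        have h1 := hvmax x hx
        simp only [lmap_apply]
        have h2 := hQA.2
        linarith
    · -- both empty: impossible since T is nonempty
      exfalso
      obtain ⟨x, hx⟩ := hTne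
      rcases claimT x hx with hlow | hhigh
      · exact hBne ⟨x, hTsub hx, hlow⟩
      · exact hAne ⟨x, hTsub hx, hhigh⟩
  · -- nothing remains: any functional works
    refine ⟨lmap 0 0, -1, ?_, ?_⟩
    · intro x hx
      simp only [lmap_apply]
      norm_num
    · intro x hx
      rw [← hRdef] at hx
      exact absurd ⟨x, hx⟩ hR
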